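/- For all m, n ≥ 0 the complete Bell polynomials satisfy the identity Y_{m+n} = Σ_{l=1}^{m} (∂Y_m/∂v_l)·D^l(Y_n) + Y_m·Y_n, where D^l is the l-th iterate of the derivation D. -/

import Mathlib

open Finset MvPolynomial

/-- The polynomial ring `ℚ[v₁, v₂, …]`; the variable `X l` represents `v_l`. -/
abbrev BellRing : Type := MvPolynomial ℕ ℚ

/-- The complete exponential Bell polynomial
`Y_n = Σ_{π ⊢ [n]} ∏_{β ∈ π} v_{|β|}`. -/
noncomputable def bellY (n : ℕ) : BellRing :=
  ∑ π : Finpartition (Finset.univ : Finset (Fin n)), ∏ β ∈ π.parts, X β.card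

noncomputable def D0 : Derivation ℚ BellRing BellRing := mkDerivation ℚ fun l => X (l + 1)

@[simp] lemma D0_X (l : ℕ) : D0 (X l) = X (l + 1) := mkDerivation_X _ _ _

/-- Leibniz rule for finset products. -/
lemma derivation_prod {ι : Type*} [DecidableEq ι] (d : Derivation ℚ BellRing BellRing)
    (t : Finset ι) (g : ι → BellRing) :
    d (∏ b ∈ t, g b) = ∑ b ∈ t, d (g b) * ∏ c ∈ t.erase b, g c := by
  induction t using Finset.induction_on with
  | empty => simp
  | insert a t ha ih =>
    rw [Finset.prod_insert ha, Derivation.leibniz, smul_eq_mul, smul_eq_mul, ih,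
      Finset.sum_insert ha, Finset.erase_insert ha, Finset.mul_sum, add_comm]
    congr 1
    · exact mul_comm _ _
    apply Finset.sum_congr rfl
    intro x hx
    rw [Finset.erase_insert_of_ne (by rintro rfl; exact ha hx),
      Finset.prod_insert (fun h => ha (Finset.erase_subset _ _ h))]
    ring

noncomputable def PP {α : Type*} [DecidableEq α] (s : Finset α) : BellRing :=
  ∑ π : Finpartition s, ∏ β ∈ π.parts, X β.card

variable {α β : Type*} [DecidableEq α] [DecidableEq β]

lemma map_preimage_of_subset (f : α ↪ β) {s : Finset α} {b : Finset β} (hb : b ⊆ s.map f) :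
    (b.preimage f f.injective.injOn).map f = b := by
  ext y
  simp only [Finset.mem_map, Finset.mem_preimage]
  constructor
  · rintro ⟨a, h, rfl⟩; exact h
  · intro hy; obtain ⟨a, -, rfl⟩ := Finset.mem_map.1 (hb hy); exact ⟨a, hy, rfl⟩

/-- Transport a finpartition of a finset along an embedding. -/
def Finpartition.mapEmb (f : α ↪ β) {s : Finset α} (π : Finpartition s) :
    Finpartition (s.map f) where
  parts := π.parts.image (Finset.map f)
  supIndep := by
    rw [Finset.supIndep_iff_pairwiseDisjoint, Finset.coe_image]
    rintro x ⟨b₁, hb₁, rfl⟩ y ⟨b₂, hb₂, rfl⟩ hxy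
    have : b₁ ≠ b₂ := by rintro rfl; exact hxy rfl
    simpa [Function.onFun, Finset.disjoint_map] using π.disjoint hb₁ hb₂ this
  sup_parts := by
    ext b
    simp only [Finset.sup_image, Finset.mem_sup, Function.comp, id_eq, Finset.mem_map]
    constructor
    · rintro ⟨β', hβ', a, ha, rfl⟩
      exact ⟨a, π.le hβ' ha, rfl⟩
    · rintro ⟨a, ha, rfl⟩
      obtain ⟨β', hβ', ha'⟩ := π.exists_mem ha
      exact ⟨β', hβ', a, ha', rfl⟩
  bot_notMem := by
    simp only [Finset.bot_eq_empty, Finset.mem_image]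
    rintro ⟨b, hb, hbe⟩
    rw [Finset.map_eq_empty] at hbe
    rw [hbe] at hb
    exact π.bot_notMem hb

/-- Untransport a finpartition of a mapped finset along an embedding. -/
noncomputable def Finpartition.preimg (f : α ↪ β) {s : Finset α} (σ : Finpartition (s.map f)) :
    Finpartition s where
  parts := σ.parts.image fun b => b.preimage f f.injective.injOn
  supIndep := by
    rw [Finset.supIndep_iff_pairwiseDisjoint, Finset.coe_image]
    rintro x ⟨b₁, hb₁, rfl⟩ y ⟨b₂, hb₂, rfl⟩ hxy
    have hne : b₁ ≠ b₂ := by rintro rfl; exact hxy rfl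
    have hd := σ.disjoint hb₁ hb₂ hne
    rw [Function.onFun, Finset.disjoint_left] at hd ⊢
    intro a ha₁ ha₂
    simp only [id_eq, Finset.mem_preimage] at ha₁ ha₂
    exact hd ha₁ ha₂
  sup_parts := by
    ext a
    simp only [Finset.sup_image, Finset.mem_sup, Function.comp, id_eq, Finset.mem_preimage]
    constructor
    · rintro ⟨b, hb, hab⟩
      have := σ.le hb hab
      rwa [Finset.mem_map'] at this
    · intro ha
      obtain ⟨b, hb, hab⟩ := σ.exists_mem ((Finset.mem_map' f).2 ha)
      exact ⟨b, hb, hab⟩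
  bot_notMem := by
    simp only [Finset.bot_eq_empty, Finset.mem_image]
    rintro ⟨b, hb, hbe⟩
    obtain ⟨y, hy⟩ := σ.nonempty_of_mem_parts hb
    obtain ⟨a, -, rfl⟩ := Finset.mem_map.1 (σ.le hb hy)
    have : a ∈ b.preimage f f.injective.injOn := Finset.mem_preimage.2 hy
    rw [hbe] at this
    exact absurd this (Finset.notMem_empty a)

lemma Finpartition.mapEmb_preimg (f : α ↪ β) {s : Finset α} (σ : Finpartition (s.map f)) :
    (σ.preimg f).mapEmb f = σ := by
  ext1
  show (σ.parts.image _).image _ = σ.parts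
  rw [Finset.image_image]
  rw [show ((Finset.map f) ∘ fun b => b.preimage f f.injective.injOn) =
    fun b : Finset β => (b.preimage f f.injective.injOn).map f from rfl]
  conv_rhs => rw [← Finset.image_id (s := σ.parts)]
  exact Finset.image_congr fun b hb => map_preimage_of_subset f (σ.le hb)

lemma Finpartition.preimg_mapEmb (f : α ↪ β) {s : Finset α} (π : Finpartition s) :
    (π.mapEmb f).preimg f = π := by
  ext1
  show (π.parts.image _).image _ = π.parts
  rw [Finset.image_image]
  conv_rhs => rw [← Finset.image_id (s := π.parts)]
  refine Finset.image_congr fun b hb => ?_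
  simp only [Function.comp_apply, id_eq]
  ext a
  simp [Finset.mem_preimage]

lemma PP_map (f : α ↪ β) (s : Finset α) : PP (s.map f) = PP s := by
  rw [PP, PP]
  refine Finset.sum_nbij' (fun σ => σ.preimg f) (fun π => π.mapEmb f)
    (fun _ _ => Finset.mem_univ _) (fun _ _ => Finset.mem_univ _)
    (fun σ _ => Finpartition.mapEmb_preimg f σ) (fun π _ => Finpartition.preimg_mapEmb f π) ?_
  intro σ _
  show _ = ∏ c ∈ σ.parts.image (fun b => b.preimage f f.injective.injOn), X c.card
  rw [Finset.prod_image ?inj]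
  case inj =>
    intro b₁ h₁ b₂ h₂ h
    have := congrArg (Finset.map f) h
    rwa [map_preimage_of_subset f (σ.le h₁), map_preimage_of_subset f (σ.le h₂)] at this
  refine Finset.prod_congr rfl fun b hb => ?_
  congr 1
  have := congrArg Finset.card (map_preimage_of_subset f (σ.le hb))
  rw [Finset.card_map] at this; exact this.symm
section core
variable {α : Type*} [DecidableEq α] {s : Finset α} {a : α}
variable {α : Type*} [DecidableEq α] {s : Finset α} {a : α}

/-- Delete the element `a` from a finpartition of `insert a s`. -/
noncomputable def delP (ha : a ∉ s) (σ : Finpartition (insert a s)) : Finpartition s :=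
  (σ.avoid {a}).copy (by
    rw [Finset.insert_sdiff_of_mem _ (Finset.mem_singleton_self a),
      Finset.sdiff_eq_self_of_disjoint (Finset.disjoint_singleton_right.2 ha)])

lemma mem_delP (ha : a ∉ s) (σ : Finpartition (insert a s)) {c : Finset α} :
    c ∈ (delP ha σ).parts ↔ ∃ d ∈ σ.parts, ¬d ⊆ {a} ∧ d.erase a = c := by
  show c ∈ (σ.avoid {a}).parts ↔ _
  rw [Finpartition.mem_avoid]
  simp only [Finset.le_eq_subset, Finset.sdiff_singleton_eq_erase]

lemma delP_parts_erase (ha : a ∉ s) (σ : Finpartition (insert a s)) :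
    (delP ha σ).parts.erase ((σ.part a).erase a) = σ.parts.erase (σ.part a) := by
  have ha' : a ∈ insert a s := Finset.mem_insert_self a s
  have ht : σ.part a ∈ σ.parts := σ.part_mem.2 ha'
  have hat : a ∈ σ.part a := σ.mem_part ha'
  ext c
  simp only [Finset.mem_erase, mem_delP ha σ]
  constructor
  · rintro ⟨hne, d, hd, hda, rfl⟩
    have hdt : d ≠ σ.part a := by rintro rfl; exact hne rfl
    have had : a ∉ d := fun h => hdt (σ.eq_of_mem_parts hd ht h hat)
    rw [Finset.erase_eq_of_notMem had]
    exact ⟨fun h => had (h ▸ hat), hd⟩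
  · rintro ⟨hne, hc⟩
    have hac : a ∉ c := fun h => hne (σ.eq_of_mem_parts hc ht h hat)
    refine ⟨?_, c, hc, ?_, Finset.erase_eq_of_notMem hac⟩
    · rintro h
      have hsub : c ⊆ σ.part a := h.le.trans (Finset.erase_subset _ _)
      have hbot : c = ⊥ := (σ.disjoint hc ht hne).eq_bot_of_le hsub
      rw [hbot] at hc
      exact σ.bot_notMem hc
    · obtain ⟨x, hx⟩ := σ.nonempty_of_mem_parts hc
      intro h
      have : x = a := Finset.mem_singleton.1 (h hx)
      exact hac (this ▸ hx)

/-- Glue the element `a` into the block `b` (or create a singleton if `b = ∅`) of a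
finpartition of `s`. -/
def glueP (ha : a ∉ s) (π : Finpartition s) (b : Finset α) (hb : b = ∅ ∨ b ∈ π.parts) :
    Finpartition (insert a s) where
  parts := insert (insert a b) (π.parts.erase b)
  supIndep := by
    have hbs : b ⊆ s := hb.elim (fun h => h ▸ Finset.empty_subset s) π.le
    rw [Finset.supIndep_iff_pairwiseDisjoint, Finset.coe_insert]
    refine Set.PairwiseDisjoint.insert ?_ ?_
    · exact π.disjoint.subset (by simp [Finset.erase_subset])
    · intro c hc hne
      rw [Finset.mem_coe, Finset.mem_erase] at hc
      simp only [id_eq]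
      rw [Finset.disjoint_insert_left]
      refine ⟨fun h => ha (π.le hc.2 h), ?_⟩
      rcases hb with rfl | hb
      · exact Finset.disjoint_empty_left c
      · exact π.disjoint hb hc.2 (Ne.symm hc.1)
  sup_parts := by
    have hbs : b ⊆ s := hb.elim (fun h => h ▸ Finset.empty_subset s) π.le
    ext x
    simp only [Finset.sup_insert, Finset.sup_eq_union, Finset.mem_union, Finset.mem_sup,
      id_eq, Finset.mem_insert, Finset.mem_erase]
    constructor
    · rintro (h | ⟨c, ⟨hcb, hc⟩, hxc⟩)
      · rcases h with rfl | hxb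
        · exact Or.inl rfl
        · exact Or.inr (hbs hxb)
      · exact Or.inr (π.le hc hxc)
    · rintro (rfl | hxs)
      · exact Or.inl (Or.inl rfl)
      · obtain ⟨c, hc, hxc⟩ := π.exists_mem hxs
        by_cases hcb : c = b
        · exact Or.inl (Or.inr (hcb ▸ hxc))
        · exact Or.inr ⟨c, ⟨hcb, hc⟩, hxc⟩
  bot_notMem := by
    simp only [Finset.bot_eq_empty, Finset.mem_insert, Finset.mem_erase]
    push_neg
    exact ⟨fun h => by simpa using congrArg (a ∈ ·) h.symm, fun _ h => π.bot_notMem h⟩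
lemma delP_mem (ha : a ∉ s) (σ : Finpartition (insert a s)) :
    (σ.part a).erase a ∈ insert ∅ (delP ha σ).parts := by
  by_cases h : (σ.part a).erase a = ∅
  · rw [h]; exact Finset.mem_insert_self _ _
  · refine Finset.mem_insert_of_mem ((mem_delP ha σ).2
      ⟨σ.part a, σ.part_mem.2 (Finset.mem_insert_self a s), ?_, rfl⟩)
    intro hsub
    exact h (Finset.subset_empty.1
      ((Finset.erase_subset_erase a hsub).trans (by rw [Finset.erase_singleton])))

lemma glueP_part_a (ha : a ∉ s) (π : Finpartition s) (b : Finset α)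
    (hb : b = ∅ ∨ b ∈ π.parts) : (glueP ha π b hb).part a = insert a b := by
  have ha' : a ∈ insert a s := Finset.mem_insert_self a s
  refine (glueP ha π b hb).eq_of_mem_parts ((glueP ha π b hb).part_mem.2 ha')
    (Finset.mem_insert_self _ _) ((glueP ha π b hb).mem_part ha') (Finset.mem_insert_self a b)

lemma glueP_erase (ha : a ∉ s) (π : Finpartition s) (b : Finset α)
    (hb : b = ∅ ∨ b ∈ π.parts) : ((glueP ha π b hb).part a).erase a = b := by
  have hab : a ∉ b := fun h => ha ((hb.elim (fun h' => h' ▸ Finset.empty_subset s) π.le) h)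
  rw [glueP_part_a, Finset.erase_insert hab]

lemma delP_glueP (ha : a ∉ s) (π : Finpartition s) (b : Finset α)
    (hb : b = ∅ ∨ b ∈ π.parts) : delP ha (glueP ha π b hb) = π := by
  have hab : a ∉ b := fun h => ha ((hb.elim (fun h' => h' ▸ Finset.empty_subset s) π.le) h)
  ext c
  rw [mem_delP]
  show (∃ d ∈ insert (insert a b) (π.parts.erase b), ¬d ⊆ {a} ∧ d.erase a = c) ↔ c ∈ π.parts
  constructor
  · rintro ⟨d, hd, hda, rfl⟩
    rcases Finset.mem_insert.1 hd with rfl | hd'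
    · rw [Finset.erase_insert hab]
      rcases hb with rfl | hbp
      · exact absurd (by simp) hda
      · exact hbp
    · have had : a ∉ d := fun h => ha (π.le (Finset.mem_of_mem_erase hd') h)
      rw [Finset.erase_eq_of_notMem had]
      exact Finset.mem_of_mem_erase hd'
  · intro hc
    have hac : a ∉ c := fun h => ha (π.le hc h)
    obtain ⟨x, hx⟩ := π.nonempty_of_mem_parts hc
    have hxa : x ≠ a := fun h => hac (h ▸ hx)
    by_cases hcb : c = b
    · subst hcb
      refine ⟨insert a c, Finset.mem_insert_self _ _, ?_, Finset.erase_insert hac⟩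
      intro h
      exact hxa (Finset.mem_singleton.1 (h (Finset.mem_insert_of_mem hx)))
    · refine ⟨c, Finset.mem_insert_of_mem (Finset.mem_erase.2 ⟨hcb, hc⟩), ?_,
        Finset.erase_eq_of_notMem hac⟩
      intro h
      exact hxa (Finset.mem_singleton.1 (h hx))

lemma glueP_delP (ha : a ∉ s) (σ : Finpartition (insert a s))
    (hb : (σ.part a).erase a = ∅ ∨ (σ.part a).erase a ∈ (delP ha σ).parts) :
    glueP ha (delP ha σ) ((σ.part a).erase a) hb = σ := by
  have ha' : a ∈ insert a s := Finset.mem_insert_self a s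
  ext1
  show insert (insert a ((σ.part a).erase a)) ((delP ha σ).parts.erase ((σ.part a).erase a))
      = σ.parts
  rw [Finset.insert_erase (σ.mem_part ha'), delP_parts_erase ha σ,
    Finset.insert_erase (σ.part_mem.2 ha')]

lemma PP_insert (ha : a ∉ s) : PP (insert a s) = D0 (PP s) + X 1 * PP s := by
  have hkey : (∑ σ : Finpartition (insert a s), ∏ β ∈ σ.parts, (X β.card : BellRing))
      = ∑ p ∈ (univ : Finset (Finpartition s)).sigma (fun π => insert ∅ π.parts),
          X (p.2.card + 1) * ∏ β ∈ p.1.parts.erase p.2, X β.card := by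
    refine Finset.sum_bij'
      (fun σ _ => (⟨delP ha σ, (σ.part a).erase a⟩ : Σ _ : Finpartition s, Finset α))
      (fun p hp => glueP ha p.1 p.2 (by
        have := (Finset.mem_sigma.1 hp).2
        rcases Finset.mem_insert.1 this with h | h
        · exact Or.inl h
        · exact Or.inr h))
      (fun σ _ => Finset.mem_sigma.2 ⟨Finset.mem_univ _, delP_mem ha σ⟩)
      (fun _ _ => Finset.mem_univ _)
      (fun σ _ => glueP_delP ha σ _)
      (fun p hp => ?_) (fun σ _ => ?_)
    · obtain ⟨π, b⟩ := p
      have hb : b = ∅ ∨ b ∈ π.parts := by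
        have := (Finset.mem_sigma.1 hp).2
        rcases Finset.mem_insert.1 this with h | h
        · exact Or.inl h
        · exact Or.inr h
      exact Sigma.ext (delP_glueP ha π b hb) (heq_of_eq (glueP_erase ha π b hb))
    · have ha' : a ∈ insert a s := Finset.mem_insert_self a s
      have hat : a ∈ σ.part a := σ.mem_part ha'
      have ht : σ.part a ∈ σ.parts := σ.part_mem.2 ha'
      show (∏ β ∈ σ.parts, (X β.card : BellRing)) = _
      rw [delP_parts_erase ha σ, Finset.card_erase_add_one hat]
      exact (Finset.mul_prod_erase σ.parts _ ht).symm
  rw [PP, hkey, Finset.sum_sigma]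
  have hstep : ∀ π : Finpartition s,
      (∑ b ∈ insert ∅ π.parts, X (b.card + 1) * ∏ β ∈ π.parts.erase b, (X β.card : BellRing))
      = D0 (∏ β ∈ π.parts, X β.card) + X 1 * ∏ β ∈ π.parts, X β.card := by
    intro π
    have hemp : (∅ : Finset α) ∉ π.parts := by simpa using π.bot_notMem
    rw [Finset.sum_insert hemp, Finset.erase_eq_of_notMem hemp, derivation_prod D0 π.parts]
    simp only [Finset.card_empty, zero_add, D0_X]
    ring
  rw [Finset.sum_congr rfl (fun π _ => hstep π), Finset.sum_add_distrib, ← Finset.mul_sum,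
    ← map_sum, PP]
end core

lemma bellY_def' (n : ℕ) : bellY n = PP (Finset.range n) := by
  have h : bellY n = PP (univ : Finset (Fin n)) := rfl
  rw [h, ← PP_map Fin.valEmbedding (univ : Finset (Fin n)), Fin.map_valEmbedding_univ,
    Nat.Iio_eq_range]

lemma bellY_zero : bellY 0 = 1 := by
  rw [bellY_def', Finset.range_zero, PP]
  haveI : Unique (Finpartition (∅ : Finset ℕ)) :=
    inferInstanceAs (Unique (Finpartition (⊥ : Finset ℕ)))
  rw [Fintype.sum_unique]
  have hp : (default : Finpartition (∅ : Finset ℕ)).parts = ∅ :=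
    Finpartition.parts_eq_empty_iff.2 rfl
  rw [hp, Finset.prod_empty]

lemma bellK (k : ℕ) : bellY (k + 1) = D0 (bellY k) + X 1 * bellY k := by
  rw [bellY_def', bellY_def', Finset.range_add_one, PP_insert Finset.notMem_range_self]

lemma pderiv_bellY_eq_zero {l m : ℕ} (h : l = 0 ∨ m < l) : pderiv l (bellY m) = 0 := by
  rw [bellY, map_sum]
  refine Finset.sum_eq_zero fun π _ => ?_
  rw [derivation_prod (pderiv l) π.parts _]
  refine Finset.sum_eq_zero fun β hβ => ?_
  have h1 : 1 ≤ β.card := (π.nonempty_of_mem_parts hβ).card_pos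
  have h2 : β.card ≤ m := le_trans (Finset.card_le_univ β) (by simp)
  rw [pderiv_X_of_ne (by omega), zero_mul]

lemma pderiv_D0_comm (l : ℕ) (hl : 1 ≤ l) (p : BellRing) :
    pderiv l (D0 p) = D0 (pderiv l p) + pderiv (l - 1) p := by
  induction p using MvPolynomial.induction_on with
  | C a => simp
  | add p q hp hq => simp only [map_add, hp, hq]; ring
  | mul_X p i hp =>
    have hD0m : ∀ q : BellRing, D0 (q * X i) = q * X (i + 1) + X i * D0 q := by
      intro q
      rw [Derivation.leibniz]
      simp only [smul_eq_mul, D0_X]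
    rw [hD0m, map_add, pderiv_mul, pderiv_mul, pderiv_mul, pderiv_mul, hp, map_add, hD0m]
    have hDc : ∀ (q : BellRing) (j j' : ℕ), D0 (q * pderiv j (X j' : BellRing)) =
        D0 q * pderiv j (X j') := by
      intro q j j'
      classical
      rw [pderiv_X]
      rcases eq_or_ne j' j with rfl | hne
      · simp
      · simp [Pi.single_eq_of_ne hne]
    rw [hDc]
    have hXX : (pderiv l (X (i + 1) : BellRing)) = pderiv (l - 1) (X i) := by
      classical
      rw [pderiv_X, pderiv_X, Pi.single_apply, Pi.single_apply]
      by_cases h : i + 1 = l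
      · rw [if_pos h, if_pos (by omega)]
      · rw [if_neg h, if_neg (by omega)]
    rw [hXX]
    ring

def SS : Set BellRing := Set.range (fun l : ℕ => X (l + 1))

lemma bellY_mem_adjoin (n : ℕ) : bellY n ∈ Algebra.adjoin ℚ SS := by
  rw [bellY]
  refine Subalgebra.sum_mem _ fun π _ => Subalgebra.prod_mem _ fun β hβ => ?_
  have h1 : 1 ≤ β.card := (π.nonempty_of_mem_parts hβ).card_pos
  have h : X β.card = (X (β.card - 1 + 1) : BellRing) := by congr 1; omega
  rw [h]
  exact Algebra.subset_adjoin ⟨β.card - 1, rfl⟩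

lemma D_eq_D0_on_adjoin (D : Derivation ℚ BellRing BellRing)
    (hD : ∀ l : ℕ, 1 ≤ l → D (X l) = X (l + 1)) :
    ∀ p ∈ Algebra.adjoin ℚ SS, D p = D0 p ∧ D0 p ∈ Algebra.adjoin ℚ SS := by
  intro p hp
  induction hp using Algebra.adjoin_induction with
  | mem x hx =>
    obtain ⟨l, rfl⟩ := hx
    refine ⟨?_, ?_⟩
    · rw [hD (l + 1) (by omega), D0_X]
    · rw [D0_X]
      exact Algebra.subset_adjoin ⟨l + 1, rfl⟩
  | algebraMap r =>
    refine ⟨?_, ?_⟩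
    · rw [Derivation.map_algebraMap, Derivation.map_algebraMap]
    · rw [Derivation.map_algebraMap]
      exact Subalgebra.zero_mem _
  | add x y hx hy ihx ihy =>
    refine ⟨?_, ?_⟩
    · rw [map_add, map_add, ihx.1, ihy.1]
    · rw [map_add]
      exact add_mem ihx.2 ihy.2
  | mul x y hx hy ihx ihy =>
    refine ⟨?_, ?_⟩
    · rw [Derivation.leibniz, Derivation.leibniz, ihx.1, ihy.1]
    · rw [Derivation.leibniz, smul_eq_mul, smul_eq_mul]
      exact add_mem (mul_mem hx ihy.2) (mul_mem hy ihx.2)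

lemma iterate_D_eq (D : Derivation ℚ BellRing BellRing)
    (hD : ∀ l : ℕ, 1 ≤ l → D (X l) = X (l + 1)) (n l : ℕ) :
    (⇑D)^[l] (bellY n) = (⇑D0)^[l] (bellY n) := by
  have key : ∀ l : ℕ, (⇑D)^[l] (bellY n) = (⇑D0)^[l] (bellY n) ∧
      (⇑D0)^[l] (bellY n) ∈ Algebra.adjoin ℚ SS := by
    intro l
    induction l with
    | zero => exact ⟨rfl, bellY_mem_adjoin n⟩
    | succ l ih =>
      obtain ⟨heq, hmem⟩ := ih
      obtain ⟨h1, h2⟩ := D_eq_D0_on_adjoin D hD _ hmem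
      refine ⟨?_, ?_⟩
      · rw [Function.iterate_succ_apply', Function.iterate_succ_apply', heq, h1]
      · rw [Function.iterate_succ_apply']
        exact h2
  exact (key l).1

lemma sum_Icc_one (m : ℕ) (f : ℕ → BellRing) :
    ∑ l ∈ Finset.Icc 1 m, f l = ∑ l ∈ Finset.range m, f (l + 1) := by
  induction m with
  | zero => simp
  | succ m ih => rw [Finset.sum_Icc_succ_top (by omega), ih, Finset.sum_range_succ]

theorem main0 (n m : ℕ) : bellY (m + n) =
    (∑ l ∈ Finset.range m, pderiv (l + 1) (bellY m) * (⇑D0)^[l + 1] (bellY n))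
      + bellY m * bellY n := by
  induction m with
  | zero => simp [bellY_zero]
  | succ m ih =>
    have hmn : m + 1 + n = (m + n) + 1 := by omega
    rw [hmn, bellK (m + n), ih]
    have hpd : ∀ l : ℕ, pderiv (l + 1) (D0 (bellY m) + X 1 * bellY m)
        = D0 (pderiv (l + 1) (bellY m)) + pderiv l (bellY m)
          + (pderiv (l + 1) (X 1) * bellY m + X 1 * pderiv (l + 1) (bellY m)) := by
      intro l
      rw [map_add, pderiv_mul, pderiv_D0_comm (l + 1) (by omega)]
      simp only [Nat.add_sub_cancel]
    simp only [bellK m]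
    simp only [hpd]
    simp only [add_mul]
    rw [Finset.sum_add_distrib, Finset.sum_add_distrib, Finset.sum_add_distrib]
    have hpdtop : pderiv (m + 1) (bellY m) = 0 := pderiv_bellY_eq_zero (Or.inr (by omega))
    have hA : ∑ l ∈ Finset.range (m + 1),
          D0 (pderiv (l + 1) (bellY m)) * (⇑D0)^[l + 1] (bellY n)
        = ∑ l ∈ Finset.range m, D0 (pderiv (l + 1) (bellY m)) * (⇑D0)^[l + 1] (bellY n) := by
      rw [Finset.sum_range_succ, hpdtop, map_zero, zero_mul, add_zero]
    have hB : ∑ l ∈ Finset.range (m + 1), pderiv l (bellY m) * (⇑D0)^[l + 1] (bellY n)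
        = ∑ l ∈ Finset.range m, pderiv (l + 1) (bellY m) * D0 ((⇑D0)^[l + 1] (bellY n)) := by
      rw [Finset.sum_range_succ', pderiv_bellY_eq_zero (Or.inl rfl), zero_mul, add_zero]
      exact Finset.sum_congr rfl fun l _ => by rw [Function.iterate_succ_apply']
    have hC : ∑ l ∈ Finset.range (m + 1),
          pderiv (l + 1) (X 1 : BellRing) * bellY m * (⇑D0)^[l + 1] (bellY n)
        = bellY m * D0 (bellY n) := by
      have hc : ∀ l ∈ Finset.range (m + 1),
          pderiv (l + 1) (X 1 : BellRing) * bellY m * (⇑D0)^[l + 1] (bellY n)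
          = if l = 0 then bellY m * D0 (bellY n) else 0 := by
        intro l _
        rcases eq_or_ne l 0 with rfl | h
        · rw [if_pos rfl, pderiv_X_self, one_mul, Function.iterate_one]
        · rw [if_neg h, pderiv_X_of_ne (by omega), zero_mul, zero_mul]
      rw [Finset.sum_congr rfl hc, Finset.sum_ite_eq' (Finset.range (m + 1)) 0,
        if_pos (Finset.mem_range.2 (by omega))]
    have hE : ∑ l ∈ Finset.range (m + 1),
          X 1 * pderiv (l + 1) (bellY m) * (⇑D0)^[l + 1] (bellY n)
        = X 1 * ∑ l ∈ Finset.range m, pderiv (l + 1) (bellY m) * (⇑D0)^[l + 1] (bellY n) := by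
      rw [Finset.sum_range_succ, hpdtop, mul_zero, zero_mul, add_zero, Finset.mul_sum]
      exact Finset.sum_congr rfl fun l _ => mul_assoc _ _ _
    rw [hA, hB, hC, hE]
    have hDS : ∀ l : ℕ, D0 (pderiv (l + 1) (bellY m) * (⇑D0)^[l + 1] (bellY n))
        = D0 (pderiv (l + 1) (bellY m)) * (⇑D0)^[l + 1] (bellY n)
          + pderiv (l + 1) (bellY m) * D0 ((⇑D0)^[l + 1] (bellY n)) := by
      intro l
      rw [Derivation.leibniz]
      simp only [smul_eq_mul]
      ring
    have hDP : D0 (bellY m * bellY n) = D0 (bellY m) * bellY n + bellY m * D0 (bellY n) := by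
      rw [Derivation.leibniz]
      simp only [smul_eq_mul]
      ring
    rw [map_add, map_sum]
    simp only [hDS]
    rw [Finset.sum_add_distrib, hDP]
    ring


/-- For all `m, n ≥ 0`,
`Y_{m+n} = Σ_{l=1}^{m} (∂Y_m/∂v_l)·D^l(Y_n) + Y_m·Y_n`,
where `D` is the derivation with `D(v_l) = v_{l+1}` (`l ≥ 1`) and `D^l` its `l`-th
iterate.  (Since `Y_m` involves only `v_1, …, v_m`, the sum over `1 ≤ l ≤ m` is the
full Fréchet derivative `(Y_m)_*` applied to `Y_n`.) -/
theorem bellY_freschet_identity (D : Derivation ℚ BellRing BellRing)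
    (hD : ∀ l : ℕ, 1 ≤ l → D (X l) = X (l + 1)) (m n : ℕ) :
    bellY (m + n) =
      (∑ l ∈ Finset.Icc 1 m, pderiv l (bellY m) * (⇑D)^[l] (bellY n)) +
        bellY m * bellY n := by
  rw [sum_Icc_one m (fun l => pderiv l (bellY m) * (⇑D)^[l] (bellY n))]
  simp only [iterate_D_eq D hD n]
  exact main0 n m
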